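/- Let K̃_{n,q} be the Dunkl q-Szász-Mirakjan-Kantorovich-Stancu operator. Then for every n ∈ ℕ⁺, 0<q<1, μ>1/2, α,β ≥ 0 and x ≥ 0, applying K̃_{n,q} to the identity function t ↦ t gives K̃_{n,q}(t;x) = (n/(n+β))·(α/n + 1/([2]_q [n]_q)) + (2nq/([2]_q (n+β)))·x. -/

import Mathlib

/-- The `q`-number `[x]_q = (1 - q^x)/(1 - q)` for a real exponent `x`. -/
noncomputable def qNum (q x : ℝ) : ℝ := (1 - q ^ x) / (1 - q)

/-- `θ_k = 0` if `k` is even and `1` if `k` is odd. -/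
def theta (k : ℕ) : ℕ := if Even k then 0 else 1

/-- The Dunkl `q`-gamma coefficients: `γ_{μ,q}(0) = 1`,
`γ_{μ,q}(k+1) = [2μθ_{k+1} + k + 1]_q ⬝ γ_{μ,q}(k)`. -/
noncomputable def gammaD (mu q : ℝ) : ℕ → ℝ
  | 0 => 1
  | k + 1 => qNum q (2 * mu * (theta (k + 1) : ℝ) + ((k : ℝ) + 1)) * gammaD mu q k

/-- The Dunkl `q`-exponential `E_{μ,q}(x) = Σ q^{k(k-1)/2} x^k / γ_{μ,q}(k)`. -/
noncomputable def EDunkl (mu q x : ℝ) : ℝ :=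
  ∑' k : ℕ, q ^ (k * (k - 1) / 2) * x ^ k / gammaD mu q k

/-- The Jackson `q`-integral `∫_a^b f(t) d_q t`. -/
noncomputable def jacksonInt (q : ℝ) (f : ℝ → ℝ) (a b : ℝ) : ℝ :=
  (1 - q) * (b * ∑' j : ℕ, q ^ j * f (b * q ^ j) - a * ∑' j : ℕ, q ^ j * f (a * q ^ j))

/-- Lower endpoint `[k + 2μθ_k]_q / (q^{k-2} [n]_q)`. -/
noncomputable def lowB (q mu : ℝ) (n k : ℕ) : ℝ :=
  qNum q ((k : ℝ) + 2 * mu * (theta k : ℝ)) / (q ^ ((k : ℝ) - 2) * qNum q (n : ℝ))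

/-- Upper endpoint `([k + 1 + 2μθ_k]_q - 1) / (q^{k-1} [n]_q) + 1/[n]_q`. -/
noncomputable def uppB (q mu : ℝ) (n k : ℕ) : ℝ :=
  (qNum q ((k : ℝ) + 1 + 2 * mu * (theta k : ℝ)) - 1) / (q ^ ((k : ℝ) - 1) * qNum q (n : ℝ))
    + 1 / qNum q (n : ℝ)

/-- The Dunkl `q`-Szász-Mirakjan-Kantorovich-Stancu operator `K̃_{n,q}(f;x)`. -/
noncomputable def KT (n : ℕ) (q mu α β : ℝ) (f : ℝ → ℝ) (x : ℝ) : ℝ :=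
  qNum q (n : ℝ) / EDunkl mu q (qNum q (n : ℝ) * x) *
    ∑' k : ℕ, (qNum q (n : ℝ) * x) ^ k / gammaD mu q k * q ^ (k * (k - 1) / 2) *
      jacksonInt q (fun t => f (((n : ℝ) * t + α) / ((n : ℝ) + β))) (lowB q mu n k) (uppB q mu n k)

open Real Filter

lemma qnum_ge_one {q : ℝ} (hq0 : 0 < q) (hq1 : q < 1) {r : ℝ} (hr : 1 ≤ r) :
    1 ≤ qNum q r := by
  have h1 : q ^ r ≤ q := by
    calc q ^ r ≤ q ^ (1 : ℝ) := Real.rpow_le_rpow_of_exponent_ge hq0 hq1.le hr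
    _ = q := Real.rpow_one q
  have h2 : (0:ℝ) < 1 - q := by linarith
  rw [qNum, le_div_iff₀ h2]; linarith

lemma gamma_ge_one {q mu : ℝ} (hq0 : 0 < q) (hq1 : q < 1) (hmu : 0 ≤ mu) :
    ∀ k, 1 ≤ gammaD mu q k
  | 0 => le_refl 1
  | (k + 1) => by
    have h1 : 1 ≤ qNum q (2 * mu * (theta (k + 1) : ℝ) + ((k : ℝ) + 1)) := by
      apply qnum_ge_one hq0 hq1
      have h2 : (0:ℝ) ≤ 2 * mu * (theta (k + 1) : ℝ) := by positivity
      have h3 : (0:ℝ) ≤ (k : ℝ) := Nat.cast_nonneg k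
      linarith
    have h4 := gamma_ge_one hq0 hq1 hmu k
    rw [gammaD]
    nlinarith

lemma qnum_two {q : ℝ} (hq0 : 0 < q) (hq1 : q < 1) : qNum q 2 = 1 + q := by
  have h1 : q ^ (2:ℝ) = q ^ (2:ℕ) := by
    rw [show (2:ℝ) = ((2:ℕ):ℝ) by norm_num, Real.rpow_natCast]
  have h2 : (1:ℝ) - q ≠ 0 := by linarith
  rw [qNum, h1]
  field_simp
  ring

lemma jackson_linear {q : ℝ} (hq0 : 0 < q) (hq1 : q < 1) (c d a b : ℝ) :
    jacksonInt q (fun t => c * t + d) a b = c * (b^2 - a^2) / (1 + q) + d * (b - a) := by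
  have hq2 : q ^ 2 < 1 := by nlinarith
  have hgeom : ∀ e : ℝ, (∑' j : ℕ, q ^ j * (c * (e * q ^ j) + d))
      = c * e / (1 - q ^ 2) + d / (1 - q) := by
    intro e
    have h1 : Summable (fun j : ℕ => c * e * (q ^ 2) ^ j) :=
      (summable_geometric_of_lt_one (by positivity) hq2).mul_left _
    have h2 : Summable (fun j : ℕ => d * q ^ j) :=
      (summable_geometric_of_lt_one hq0.le hq1).mul_left _
    have h3 : (fun j : ℕ => q ^ j * (c * (e * q ^ j) + d))
        = fun j : ℕ => c * e * (q ^ 2) ^ j + d * q ^ j := by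
      funext j
      rw [← pow_mul, mul_comm 2 j, pow_mul]
      ring
    rw [h3, Summable.tsum_add h1 h2, tsum_mul_left, tsum_mul_left,
      tsum_geometric_of_lt_one (by positivity) hq2, tsum_geometric_of_lt_one hq0.le hq1]
    field_simp
  have hq1' : (1:ℝ) - q ≠ 0 := by linarith
  have hq1'' : (1:ℝ) + q ≠ 0 := by linarith
  have hq2' : (1:ℝ) - q ^ 2 ≠ 0 := by nlinarith
  rw [jacksonInt, hgeom, hgeom]
  field_simp
  ring

set_option maxHeartbeats 1000000 in
theorem KT_id (n : ℕ) (hn : 0 < n) (q mu α β x : ℝ)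
    (hq0 : 0 < q) (hq1 : q < 1) (hmu : 1 / 2 < mu) (hα : 0 ≤ α) (hβ : 0 ≤ β) (hx : 0 ≤ x) :
    KT n q mu α β (fun t => t) x =
      (n : ℝ) / ((n : ℝ) + β) * (α / (n : ℝ) + 1 / (qNum q 2 * qNum q (n : ℝ)))
        + 2 * (n : ℝ) * q / (qNum q 2 * ((n : ℝ) + β)) * x := by
  have hmu0 : (0:ℝ) ≤ mu := by linarith
  have hq1' : (0:ℝ) < 1 - q := by linarith
  have hn1 : (1:ℝ) ≤ (n : ℝ) := by exact_mod_cast hn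
  set N : ℝ := qNum q (n : ℝ) with hNdef
  have hN1 : 1 ≤ N := qnum_ge_one hq0 hq1 hn1
  have hN : 0 < N := by linarith
  have hnβ : (0:ℝ) < (n : ℝ) + β := by linarith
  set c : ℝ := (n : ℝ) / ((n : ℝ) + β) with hcdef
  set d : ℝ := α / ((n : ℝ) + β) with hddef
  set P : ℕ → ℝ := fun k => (N * x) ^ k / gammaD mu q k * q ^ (k * (k - 1) / 2) with hPdef
  have hγ : ∀ k, 1 ≤ gammaD mu q k := fun k => gamma_ge_one hq0 hq1 hmu0 k
  have hγ0 : ∀ k, (0:ℝ) < gammaD mu q k := fun k => lt_of_lt_of_le one_pos (hγ k)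
  have hPnn : ∀ k, 0 ≤ P k := by
    intro k
    have := (hγ0 k).le
    have hNx : (0:ℝ) ≤ N * x := mul_nonneg hN.le hx
    positivity
  -- triangular number identity
  have htri : ∀ k : ℕ, (k + 1) * ((k + 1) - 1) / 2 = k * (k - 1) / 2 + k := by
    intro k
    cases k with
    | zero => rfl
    | succ j =>
      have h1 : (j + 1 + 1) * (j + 1) = (j + 1) * j + (j + 1) * 2 := by ring
      simp only [Nat.add_sub_cancel]
      rw [h1, Nat.add_mul_div_right _ _ (by norm_num : 0 < 2)]
  -- recursion for P
  have hQarg : ∀ k : ℕ, 1 ≤ qNum q (2 * mu * (theta (k + 1) : ℝ) + ((k : ℝ) + 1)) := by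
    intro k
    apply qnum_ge_one hq0 hq1
    have h2 : (0:ℝ) ≤ 2 * mu * (theta (k + 1) : ℝ) := by positivity
    have h3 : (0:ℝ) ≤ (k : ℝ) := Nat.cast_nonneg k
    linarith
  have hPrec : ∀ k : ℕ, P (k + 1) =
      P k * ((N * x) * q ^ k) / qNum q (2 * mu * (theta (k + 1) : ℝ) + ((k : ℝ) + 1)) := by
    intro k
    have hQ : (0:ℝ) < qNum q (2 * mu * (theta (k + 1) : ℝ) + ((k : ℝ) + 1)) :=
      lt_of_lt_of_le one_pos (hQarg k)
    simp only [hPdef, gammaD, htri k, pow_add, pow_succ]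
    field_simp
  -- Summability of P
  have hP : Summable P := by
    apply summable_of_ratio_norm_eventually_le (r := 1/2) (by norm_num)
    have hten : Tendsto (fun k : ℕ => (N * x) * q ^ k) atTop (nhds 0) := by
      simpa using (tendsto_pow_atTop_nhds_zero_of_lt_one (le_of_lt hq0) hq1).const_mul (N * x)
    have hev : ∀ᶠ k : ℕ in atTop, (N * x) * q ^ k ≤ 1/2 :=
      hten.eventually (eventually_le_nhds (by norm_num))
    filter_upwards [hev] with k hk
    rw [Real.norm_of_nonneg (hPnn (k+1)), Real.norm_of_nonneg (hPnn k), hPrec k]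
    have hQ1 := hQarg k
    have hQ : (0:ℝ) < qNum q (2 * mu * (theta (k + 1) : ℝ) + ((k : ℝ) + 1)) :=
      lt_of_lt_of_le one_pos hQ1
    have h1 : P k * ((N * x) * q ^ k) ≤ P k * (1/2) :=
      mul_le_mul_of_nonneg_left hk (hPnn k)
    have hnum : 0 ≤ P k * ((N * x) * q ^ k) := by
      have := hPnn k
      have hNx : (0:ℝ) ≤ N * x := mul_nonneg hN.le hx
      positivity
    calc P k * ((N * x) * q ^ k) / qNum q (2 * mu * (theta (k + 1) : ℝ) + ((k : ℝ) + 1))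
        ≤ P k * ((N * x) * q ^ k) := div_le_self hnum hQ1
      _ ≤ 1/2 * P k := by linarith
  -- shift identity for P k * lowB
  have hshift : ∀ k : ℕ, P (k + 1) * lowB q mu n (k + 1) = q * x * P k := by
    intro k
    have hQ : (0:ℝ) < qNum q (2 * mu * (theta (k + 1) : ℝ) + ((k : ℝ) + 1)) :=
      lt_of_lt_of_le one_pos (hQarg k)
    have harg : ((k + 1 : ℕ) : ℝ) + 2 * mu * (theta (k + 1) : ℝ)
        = 2 * mu * (theta (k + 1) : ℝ) + ((k : ℝ) + 1) := by push_cast; ring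
    have hrp : q ^ (((k + 1 : ℕ) : ℝ) - 2) = q ^ (k + 1 : ℕ) / q ^ (2 : ℕ) := by
      rw [show (2:ℝ) = ((2:ℕ):ℝ) by norm_num, Real.rpow_sub hq0, Real.rpow_natCast,
        Real.rpow_natCast]
    rw [lowB, harg, hrp]
    simp only [hPdef, gammaD, htri k, pow_add, pow_succ]
    have hqk : (0:ℝ) < q ^ k := by positivity
    rw [← hNdef]
    field_simp [hQ.ne', (hγ0 k).ne', hN.ne', hq0.ne', hqk.ne']
  have hlow0 : lowB q mu n 0 = 0 := by
    have : ((0 : ℕ) : ℝ) + 2 * mu * (theta 0 : ℝ) = 0 := by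
      simp [theta]
    rw [lowB, this, qNum, Real.rpow_zero]
    simp
  -- summability of g = fun k => P k * lowB k
  have hg : Summable (fun k => P k * lowB q mu n k) := by
    apply (summable_nat_add_iff 1).mp
    have : (fun k : ℕ => P (k + 1) * lowB q mu n (k + 1)) = fun k => q * x * P k := by
      funext k; exact hshift k
    rw [this]
    exact hP.mul_left _
  -- E equals tsum P, and is positive
  have hE : EDunkl mu q (N * x) = ∑' k, P k := by
    apply tsum_congr
    intro k
    simp only [EDunkl, hPdef]
    ring
  have hE1 : 1 ≤ ∑' k, P k := by
    have h0 : P 0 = 1 := by simp [hPdef, gammaD]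
    calc (1:ℝ) = P 0 := h0.symm
      _ ≤ ∑' k, P k := Summable.le_tsum hP 0 (fun j _ => hPnn j)
  have hEpos : 0 < ∑' k, P k := lt_of_lt_of_le one_pos hE1
  -- tsum of g
  have hgsum : (∑' k, P k * lowB q mu n k) = q * x * ∑' k, P k := by
    rw [Summable.tsum_eq_zero_add hg, hlow0]
    simp only [mul_zero, zero_add]
    calc (∑' k : ℕ, P (k + 1) * lowB q mu n (k + 1)) = ∑' k : ℕ, q * x * P k :=
        tsum_congr hshift
      _ = q * x * ∑' k, P k := tsum_mul_left
  -- endpoints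
  have huppB : ∀ k, uppB q mu n k = lowB q mu n k + 1 / N := by
    intro k
    have hs1 : (k : ℝ) + 1 + 2 * mu * (theta k : ℝ)
        = ((k : ℝ) + 2 * mu * (theta k : ℝ)) + 1 := by ring
    have hnum : qNum q ((k : ℝ) + 1 + 2 * mu * (theta k : ℝ)) - 1
        = q * qNum q ((k : ℝ) + 2 * mu * (theta k : ℝ)) := by
      rw [hs1, qNum, qNum, Real.rpow_add_one hq0.ne']
      field_simp
      ring
    have hrp1 : q ^ ((k : ℝ) - 1) = q ^ ((k : ℝ) - 2) * q := by
      rw [show (k : ℝ) - 1 = ((k : ℝ) - 2) + 1 by ring, Real.rpow_add_one hq0.ne']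
    have hrpos : (0:ℝ) < q ^ ((k : ℝ) - 2) := Real.rpow_pos_of_pos hq0 _
    rw [uppB, lowB, hnum, hrp1, ← hNdef]
    field_simp
  -- the jackson integral of the linear map
  have hfun : (fun t : ℝ => ((n : ℝ) * t + α) / ((n : ℝ) + β)) = fun t => c * t + d := by
    funext t
    rw [hcdef, hddef]
    field_simp
  have hjack : ∀ k, jacksonInt q (fun t => ((n : ℝ) * t + α) / ((n : ℝ) + β))
      (lowB q mu n k) (uppB q mu n k)
      = 2 * c / ((1 + q) * N) * lowB q mu n k + (c / ((1 + q) * N ^ 2) + d / N) := by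
    intro k
    rw [hfun, jackson_linear hq0 hq1, huppB k]
    have h1q : (0:ℝ) < 1 + q := by linarith
    field_simp
    ring
  -- main computation
  have hterm : ∀ k : ℕ, (N * x) ^ k / gammaD mu q k * q ^ (k * (k - 1) / 2) *
      jacksonInt q (fun t => ((n : ℝ) * t + α) / ((n : ℝ) + β)) (lowB q mu n k) (uppB q mu n k)
      = 2 * c / ((1 + q) * N) * (P k * lowB q mu n k)
        + (c / ((1 + q) * N ^ 2) + d / N) * P k := by
    intro k
    rw [hjack k]
    simp only [hPdef]
    ring
  have hsum : (∑' k : ℕ, (N * x) ^ k / gammaD mu q k * q ^ (k * (k - 1) / 2) *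
      jacksonInt q (fun t => ((n : ℝ) * t + α) / ((n : ℝ) + β)) (lowB q mu n k) (uppB q mu n k))
      = 2 * c / ((1 + q) * N) * (q * x * ∑' k, P k)
        + (c / ((1 + q) * N ^ 2) + d / N) * ∑' k, P k := by
    rw [tsum_congr hterm, Summable.tsum_add (hg.mul_left _) (hP.mul_left _), tsum_mul_left,
      tsum_mul_left, hgsum]
  rw [show KT n q mu α β (fun t => t) x =
      N / EDunkl mu q (N * x) *
        ∑' k : ℕ, (N * x) ^ k / gammaD mu q k * q ^ (k * (k - 1) / 2) *
          jacksonInt q (fun t => ((n : ℝ) * t + α) / ((n : ℝ) + β))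
            (lowB q mu n k) (uppB q mu n k) from rfl, hE, hsum]
  have h1q : (0:ℝ) < 1 + q := by linarith
  have hq2 : qNum q 2 = 1 + q := qnum_two hq0 hq1
  rw [hq2, hcdef, hddef]
  have hn0 : (n : ℝ) ≠ 0 := by positivity
  field_simp [hEpos.ne', hN.ne', h1q.ne', hnβ.ne']
  ring
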